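/- Let μ = N(m,Σ) be a Gaussian measure on ℝ^d with non-singular covariance Σ, let X and Y be independent random vectors each distributed according to μ, and let P_r be a Σ^{-1}-orthogonal projector. Then the random vector Z = P_r X + (I−P_r) Y is also distributed according to μ = N(m,Σ). -/

import Mathlib

open MeasureTheory Matrix
open scoped ProbabilityTheory ENNReal

private lemma gipm_polar {d : ℕ} (N : Matrix (Fin d) (Fin d) ℝ)
    (h : ∀ x : Fin d → ℝ, x ⬝ᵥ N.mulVec x = 0) : N + Nᵀ = 0 := by
  ext i j
  have hij := h (Pi.single i 1 + Pi.single j 1)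
  have hi := h (Pi.single i 1)
  have hj := h (Pi.single j 1)
  simp only [add_dotProduct, dotProduct_add, Matrix.mulVec_add, Matrix.mulVec_single_one,
    single_dotProduct, Matrix.col_apply, one_mul, mul_one] at *
  simp only [Matrix.add_apply, Matrix.transpose_apply, Matrix.zero_apply]
  linarith

private lemma gipm_Mzero {d : ℕ} (S P : Matrix (Fin d) (Fin d) ℝ)
    (hS : S.PosDef) (hP : P * P = P)
    (horth : ∀ x : Fin d → ℝ, x ⬝ᵥ (Pᵀ * S⁻¹ * (1 - P)).mulVec x = 0) :
    Pᵀ * S⁻¹ * (1 - P) = 0 := by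
  set A := S⁻¹ with hA
  have hSsymm : Sᵀ = S := hS.isHermitian.eq
  have hAT : Aᵀ = A := by rw [hA, Matrix.transpose_nonsing_inv, hSsymm]
  have hPT : Pᵀ * Pᵀ = Pᵀ := by rw [← Matrix.transpose_mul, hP]
  have h1 := gipm_polar _ horth
  simp only [Matrix.transpose_mul, Matrix.transpose_sub, Matrix.transpose_one, hAT,
    Matrix.transpose_transpose] at h1
  simp only [sub_mul, mul_sub, mul_one, one_mul, ← Matrix.mul_assoc] at h1 ⊢
  have h2 := congrArg (fun X => Pᵀ * X) h1
  simp only [mul_sub, mul_add, ← Matrix.mul_assoc, hPT, mul_zero] at h2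
  simpa using h2

private lemma gipm_dotBC {d : ℕ} (A B C : Matrix (Fin d) (Fin d) ℝ) (u v : Fin d → ℝ) :
    B.mulVec u ⬝ᵥ A.mulVec (C.mulVec v) = u ⬝ᵥ (Bᵀ * A * C).mulVec v := by
  rw [Matrix.mulVec_mulVec, Matrix.dotProduct_mulVec, ← Matrix.vecMul_transpose,
    Matrix.vecMul_vecMul, Matrix.dotProduct_mulVec, Matrix.mul_assoc]

private lemma gipm_quadkey {d : ℕ} (S P : Matrix (Fin d) (Fin d) ℝ)
    (hS : S.PosDef) (hP : P * P = P)
    (horth : ∀ x : Fin d → ℝ, x ⬝ᵥ (Pᵀ * S⁻¹ * (1 - P)).mulVec x = 0)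
    (u v : Fin d → ℝ) :
    (P.mulVec u + (1-P).mulVec v) ⬝ᵥ S⁻¹.mulVec (P.mulVec u + (1-P).mulVec v)
      + ((1-P).mulVec u + P.mulVec v) ⬝ᵥ S⁻¹.mulVec ((1-P).mulVec u + P.mulVec v)
      = u ⬝ᵥ S⁻¹.mulVec u + v ⬝ᵥ S⁻¹.mulVec v := by
  set A := S⁻¹ with hA
  set Q := (1 : Matrix (Fin d) (Fin d) ℝ) - P with hQ
  have hM0 : Pᵀ * A * Q = 0 := gipm_Mzero S P hS hP horth
  have hSsymm : Sᵀ = S := hS.isHermitian.eq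
  have hAT : Aᵀ = A := by rw [hA, Matrix.transpose_nonsing_inv, hSsymm]
  have hM0' : Qᵀ * A * P = 0 := by
    have := congrArg Matrix.transpose hM0
    simpa [Matrix.transpose_mul, hAT, Matrix.mul_assoc] using this
  have hsum : Pᵀ * A * P + Qᵀ * A * Q = A := by
    have h1 : (P + Q)ᵀ * A * (P + Q) = A := by
      rw [hQ]; simp
    calc Pᵀ * A * P + Qᵀ * A * Q
        = (P + Q)ᵀ * A * (P + Q) - Pᵀ * A * Q - Qᵀ * A * P := by
          simp only [Matrix.transpose_add, add_mul, mul_add]; abel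
      _ = A := by rw [h1, hM0, hM0']; simp
  simp only [Matrix.mulVec_add, dotProduct_add, add_dotProduct, gipm_dotBC, hM0, hM0',
    Matrix.zero_mulVec, dotProduct_zero]
  have hu : u ⬝ᵥ A.mulVec u = u ⬝ᵥ (Pᵀ * A * P).mulVec u + u ⬝ᵥ (Qᵀ * A * Q).mulVec u := by
    rw [← dotProduct_add, ← Matrix.add_mulVec, hsum]
  have hv : v ⬝ᵥ A.mulVec v = v ⬝ᵥ (Pᵀ * A * P).mulVec v + v ⬝ᵥ (Qᵀ * A * Q).mulVec v := by
    rw [← dotProduct_add, ← Matrix.add_mulVec, hsum]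
  rw [hu, hv]; ring

private lemma gipm_withDensity_prod {α β : Type*} [MeasurableSpace α] [MeasurableSpace β]
    (μ : Measure α) (ν : Measure β) [SigmaFinite μ] [SigmaFinite ν]
    (f : α → ℝ≥0∞) (g : β → ℝ≥0∞) (hf : Measurable f) (hg : Measurable g)
    [SigmaFinite (μ.withDensity f)] [SigmaFinite (ν.withDensity g)] :
    (μ.withDensity f).prod (ν.withDensity g)
      = (μ.prod ν).withDensity (fun p => f p.1 * g p.2) := by
  refine Measure.prod_eq fun s t hs ht => ?_
  rw [withDensity_apply _ (hs.prod ht), ← Measure.prod_restrict,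
    lintegral_prod_mul hf.aemeasurable hg.aemeasurable,
    withDensity_apply _ hs, withDensity_apply _ ht]

private lemma gipm_map_withDensity {α β : Type*} [MeasurableSpace α] [MeasurableSpace β]
    (e : α ≃ᵐ β) (μ : Measure α) (f : α → ℝ≥0∞) (hf : Measurable f) :
    (μ.withDensity f).map e = (μ.map e).withDensity (fun y => f (e.symm y)) := by
  ext s hs
  rw [MeasurableEquiv.map_apply, withDensity_apply _ (e.measurable hs),
    withDensity_apply _ hs]
  have := setLIntegral_map (μ := μ) hs (hf.comp e.symm.measurable) e.measurable
  simp only [Function.comp_apply, MeasurableEquiv.symm_apply_apply] at this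
  exact this.symm

noncomputable def gipm_Tlin {d : ℕ} (P : Matrix (Fin d) (Fin d) ℝ) :
    ((Fin d → ℝ) × (Fin d → ℝ)) →ₗ[ℝ] ((Fin d → ℝ) × (Fin d → ℝ)) :=
  LinearMap.prod
    (P.mulVecLin.comp (LinearMap.fst ℝ _ _) + (1 - P).mulVecLin.comp (LinearMap.snd ℝ _ _))
    ((1 - P).mulVecLin.comp (LinearMap.fst ℝ _ _) + P.mulVecLin.comp (LinearMap.snd ℝ _ _))

lemma gipm_Tlin_apply {d : ℕ} (P : Matrix (Fin d) (Fin d) ℝ) (p : (Fin d → ℝ) × (Fin d → ℝ)) :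
    gipm_Tlin P p = (P.mulVec p.1 + (1 - P).mulVec p.2, (1 - P).mulVec p.1 + P.mulVec p.2) := rfl

lemma gipm_Tlin_invol {d : ℕ} (P : Matrix (Fin d) (Fin d) ℝ) (hP : P * P = P)
    (p : (Fin d → ℝ) × (Fin d → ℝ)) :
    gipm_Tlin P (gipm_Tlin P p) = p := by
  set Q := (1 : Matrix (Fin d) (Fin d) ℝ) - P with hQ
  have h1 : P * P + Q * Q = 1 := by
    simp only [hQ, mul_sub, sub_mul, hP, mul_one, one_mul]; abel
  have h2 : P * Q + Q * P = 0 := by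
    simp only [hQ, mul_sub, sub_mul, hP, mul_one, one_mul]; abel
  simp only [gipm_Tlin_apply, Matrix.mulVec_add, Matrix.mulVec_mulVec]
  refine Prod.ext ?_ ?_
  · show (P*P).mulVec p.1 + (P*Q).mulVec p.2 + ((Q*Q).mulVec p.1 + (Q*P).mulVec p.2) = p.1
    calc (P*P).mulVec p.1 + (P*Q).mulVec p.2 + ((Q*Q).mulVec p.1 + (Q*P).mulVec p.2)
        = (P*P + Q*Q).mulVec p.1 + (P*Q + Q*P).mulVec p.2 := by
          simp only [Matrix.add_mulVec]; abel
      _ = p.1 := by rw [h1, h2]; simp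
  · show (Q*P).mulVec p.1 + (Q*Q).mulVec p.2 + ((P*Q).mulVec p.1 + (P*P).mulVec p.2) = p.2
    calc (Q*P).mulVec p.1 + (Q*Q).mulVec p.2 + ((P*Q).mulVec p.1 + (P*P).mulVec p.2)
        = (P*Q + Q*P).mulVec p.1 + (P*P + Q*Q).mulVec p.2 := by
          simp only [Matrix.add_mulVec]; abel
      _ = p.2 := by rw [h1, h2]; simp

lemma gipm_Tlin_volume {d : ℕ} (P : Matrix (Fin d) (Fin d) ℝ) (hP : P * P = P) :
    Measure.map (gipm_Tlin P) (volume : Measure ((Fin d → ℝ) × (Fin d → ℝ))) = volume := by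
  haveI : (volume : Measure ((Fin d → ℝ) × (Fin d → ℝ))).IsAddHaarMeasure := by
    rw [Measure.volume_eq_prod]
    exact Measure.prod.instIsAddHaarMeasure _ _
  have hcomp : gipm_Tlin P ∘ₗ gipm_Tlin P = LinearMap.id := by
    apply LinearMap.ext; intro p; exact gipm_Tlin_invol P hP p
  have hdet2 : LinearMap.det (gipm_Tlin P) * LinearMap.det (gipm_Tlin P) = 1 := by
    rw [← LinearMap.det_comp, hcomp, LinearMap.det_id]
  have habs : |(LinearMap.det (gipm_Tlin P))⁻¹| = 1 := by
    rcases mul_self_eq_one_iff.mp hdet2 with h | h <;> rw [h] <;> norm_num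
  rw [Measure.map_linearMap_addHaar_eq_smul_addHaar _ (by
      intro h; rw [h, mul_zero] at hdet2; exact zero_ne_one hdet2), habs]
  simp

/-- The Gaussian measure `N(m, Σ)` on ℝ^d with non-singular covariance `Σ`,
defined through its Lebesgue density. -/
noncomputable def gaussian (d : ℕ) (m : Fin d → ℝ) (S : Matrix (Fin d) (Fin d) ℝ) :
    Measure (Fin d → ℝ) :=
  volume.withDensity fun x =>
    ENNReal.ofReal ((Real.sqrt ((2 * Real.pi) ^ d * S.det))⁻¹ *
      Real.exp (-(1 / 2) * ((x - m) ⬝ᵥ S⁻¹.mulVec (x - m))))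

/-- If `X, Y ∼ N(m, Σ)` are independent and `P` is a `Σ⁻¹`-orthogonal projector,
then `Z = P X + (I - P) Y` is also distributed according to `N(m, Σ)`. -/
theorem gaussian_invariant_under_projector_mixing (d : ℕ)
    (m : Fin d → ℝ) (S P : Matrix (Fin d) (Fin d) ℝ)
    (hS : S.PosDef) (hP : P * P = P)
    (horth : ∀ x : Fin d → ℝ, x ⬝ᵥ (Pᵀ * S⁻¹ * (1 - P)).mulVec x = 0)
    {Ω : Type*} [MeasureSpace Ω] [IsProbabilityMeasure (ℙ : Measure Ω)]
    (X Y : Ω → (Fin d → ℝ)) (hX : Measurable X) (hY : Measurable Y)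
    (hindep : ProbabilityTheory.IndepFun X Y ℙ)
    (hXlaw : Measure.map X ℙ = gaussian d m S)
    (hYlaw : Measure.map Y ℙ = gaussian d m S) :
    Measure.map (fun ω => P.mulVec (X ω) + (1 - P).mulVec (Y ω)) ℙ = gaussian d m S := by
  classical
  set c : ℝ := (Real.sqrt ((2 * Real.pi) ^ d * S.det))⁻¹ with hc
  have hc0 : 0 ≤ c := inv_nonneg.mpr (Real.sqrt_nonneg _)
  set f : (Fin d → ℝ) → ℝ≥0∞ := fun x =>
    ENNReal.ofReal (c * Real.exp (-(1 / 2) * ((x - m) ⬝ᵥ S⁻¹.mulVec (x - m)))) with hfdef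
  have hgauss : gaussian d m S = volume.withDensity f := rfl
  -- measurability of the density
  have hsub : Continuous fun x : Fin d → ℝ => x - m := continuous_id.sub continuous_const
  have hdc : Continuous fun x : Fin d → ℝ => (x - m) ⬝ᵥ S⁻¹.mulVec (x - m) := by
    simp only [dotProduct, Matrix.mulVec]
    apply continuous_finset_sum
    intro i _
    exact (((continuous_apply i).comp hsub)).mul
      (continuous_finset_sum _ fun j _ =>
        continuous_const.mul ((continuous_apply j).comp hsub))
  have hcont : Continuous fun x : Fin d → ℝ =>
      c * Real.exp (-(1 / 2) * ((x - m) ⬝ᵥ S⁻¹.mulVec (x - m))) :=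
    continuous_const.mul (Real.continuous_exp.comp (continuous_const.mul hdc))
  have hf : Measurable f := ENNReal.measurable_ofReal.comp hcont.measurable
  set F : ((Fin d → ℝ) × (Fin d → ℝ)) → ℝ≥0∞ := fun p => f p.1 * f p.2 with hFdef
  have hF : Measurable F := (hf.comp measurable_fst).mul (hf.comp measurable_snd)
  -- the mixing map
  set Tf : ((Fin d → ℝ) × (Fin d → ℝ)) → ((Fin d → ℝ) × (Fin d → ℝ)) :=
    fun p => gipm_Tlin P p with hTfdef
  have hTmeas : Measurable Tf := (gipm_Tlin P).continuous_of_finiteDimensional.measurable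
  have hTinvol : ∀ p, Tf (Tf p) = p := gipm_Tlin_invol P hP
  let e : ((Fin d → ℝ) × (Fin d → ℝ)) ≃ᵐ ((Fin d → ℝ) × (Fin d → ℝ)) :=
    { toFun := Tf, invFun := Tf, left_inv := hTinvol, right_inv := hTinvol,
      measurable_toFun := hTmeas, measurable_invFun := hTmeas }
  -- density invariance
  have harg : ∀ x y : Fin d → ℝ,
      P.mulVec x + (1 - P).mulVec y - m = P.mulVec (x - m) + (1 - P).mulVec (y - m) := by
    intro x y
    have hm : P.mulVec m + (1 - P).mulVec m = m := by
      rw [← Matrix.add_mulVec]; simp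
    rw [Matrix.mulVec_sub, Matrix.mulVec_sub, sub_add_sub_comm, hm]
  have hFT : ∀ p, F (Tf p) = F p := by
    intro p
    have hq := gipm_quadkey S P hS hP horth (p.1 - m) (p.2 - m)
    have hTp : Tf p = (P.mulVec p.1 + (1 - P).mulVec p.2,
        (1 - P).mulVec p.1 + P.mulVec p.2) := rfl
    have hmul : ∀ s t : ℝ, ENNReal.ofReal (c * Real.exp s) * ENNReal.ofReal (c * Real.exp t)
        = ENNReal.ofReal (c * c * Real.exp (s + t)) := by
      intro s t
      rw [← ENNReal.ofReal_mul (by positivity), Real.exp_add]; ring_nf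
    have harg2 : (1 - P).mulVec p.1 + P.mulVec p.2 - m
        = (1 - P).mulVec (p.1 - m) + P.mulVec (p.2 - m) := by
      have hm : (1 - P).mulVec m + P.mulVec m = m := by
        rw [← Matrix.add_mulVec]; simp
      rw [Matrix.mulVec_sub, Matrix.mulVec_sub, sub_add_sub_comm, hm]
    simp only [hFdef, hfdef, hTp, harg, harg2]
    rw [hmul, hmul]
    congr 1
    congr 1
    congr 1
    linarith [hq]
  -- the law of the pair
  haveI hprob : IsProbabilityMeasure (gaussian d m S) := by
    rw [← hXlaw]; exact Measure.isProbabilityMeasure_map hX.aemeasurable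
  haveI : SigmaFinite (volume.withDensity f) := by
    rw [← hgauss]; infer_instance
  have hpair : Measure.map (fun ω => (X ω, Y ω)) ℙ = (gaussian d m S).prod (gaussian d m S) := by
    rw [(ProbabilityTheory.indepFun_iff_map_prod_eq_prod_map_map
      hX.aemeasurable hY.aemeasurable).mp hindep, hXlaw, hYlaw]
  have hprodF : (gaussian d m S).prod (gaussian d m S)
      = (volume : Measure ((Fin d → ℝ) × (Fin d → ℝ))).withDensity F := by
    rw [hgauss, gipm_withDensity_prod volume volume f f hf hf, ← Measure.volume_eq_prod]
  -- invariance of the joint law under Tf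
  have hmapT : Measure.map Tf ((gaussian d m S).prod (gaussian d m S))
      = (gaussian d m S).prod (gaussian d m S) := by
    rw [hprodF]
    have h1 : Measure.map Tf (volume.withDensity F) = Measure.map e (volume.withDensity F) := rfl
    rw [h1, gipm_map_withDensity e volume F hF]
    have h2 : Measure.map e (volume : Measure ((Fin d → ℝ) × (Fin d → ℝ))) = volume := by
      have h3 : Measure.map e (volume : Measure ((Fin d → ℝ) × (Fin d → ℝ)))
          = Measure.map (gipm_Tlin P) volume := rfl
      rw [h3, gipm_Tlin_volume P hP]
    rw [h2]
    congr 1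
    funext y
    have h4 : e.symm y = Tf y := rfl
    rw [h4, hFT]
  -- final assembly
  have hZ : (fun ω => P.mulVec (X ω) + (1 - P).mulVec (Y ω))
      = Prod.fst ∘ (Tf ∘ fun ω => (X ω, Y ω)) := rfl
  rw [hZ, ← Measure.map_map measurable_fst (hTmeas.comp (hX.prodMk hY)),
    ← Measure.map_map hTmeas (hX.prodMk hY), hpair, hmapT]
  show ((gaussian d m S).prod (gaussian d m S)).fst = gaussian d m S
  rw [Measure.fst_prod]
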